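/- Fix 1 ≤ p < ∞ and w = (w_i) a non-increasing sequence of positive reals with w_1 = 1, w_i → 0, and ∑ w_i = ∞. Then there is no constant C < ∞ such that ‖(b_{π(k)})_k‖_{g(w,p)} ≤ C ‖(b_k)_k‖_{g(w,p)} for all sequences (b_k) with finite Garling norm and all bijections π of ℕ. (In particular, the canonical basis of the Garling space g(w,p) is not symmetric.) -/

import Mathlib

set_option maxHeartbeats 1000000

open scoped NNReal ENNReal
open Filter Finset

/-- The Garling norm `‖f‖_{g(w,p)} = sup_{φ strictly increasing} (∑_i |f(φ(i))|^p w_i)^{1/p}`,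
with values in `[0,∞]`. -/
noncomputable def garlingNorm (w : ℕ → ℝ) (p : ℝ) (f : ℕ → ℝ) : ℝ≥0∞ :=
  (⨆ φ : {φ : ℕ → ℕ // StrictMono φ},
    ∑' i : ℕ, ENNReal.ofReal (|f (φ.1 i)| ^ p * w i)) ^ (1 / p)

private lemma aux_downclosed (s : Finset ℕ) (h : ∀ a b : ℕ, a ≤ b → b ∈ s → a ∈ s) :
    s = Finset.range s.card := by
  rcases s.eq_empty_or_nonempty with rfl | hs
  · simp
  · have hmax := s.max'_mem hs
    have hrange : s = Finset.range (s.max' hs + 1) := by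
      apply Finset.Subset.antisymm
      · intro a ha
        simpa [Nat.lt_succ_iff] using s.le_max' a ha
      · intro a ha
        rw [Finset.mem_range, Nat.lt_succ_iff] at ha
        exact h a _ ha hmax
    rw [hrange, Finset.card_range]

private lemma aux_telescope (K : ℕ → ℕ) (hK0 : K 0 = 0) (hK : Monotone K) (h : ℕ → ℝ) :
    ∀ M, ∑ i ∈ range (K M), h i = ∑ t ∈ range M, ∑ i ∈ Ico (K t) (K (t + 1)), h i := by
  intro M
  induction M with
  | zero => simp [hK0]
  | succ M ih =>
    rw [Finset.sum_range_succ, ← ih, Finset.range_eq_Ico, Finset.range_eq_Ico]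
    exact (Finset.sum_Ico_consecutive h (Nat.zero_le _) (hK (Nat.le_succ M))).symm

private lemma aux_inv_mul_le (a b c : ℝ) (hb : 0 < b) (hc : 0 < c) (h : c * a ≤ b) :
    b⁻¹ * a ≤ 1 / c := by
  rw [inv_mul_eq_div, div_le_div_iff₀ hb hc]
  nlinarith [h]

private lemma aux_le_inv_mul (b x c : ℝ) (hb : 0 < b) (h : c * b ≤ x) : c ≤ b⁻¹ * x := by
  rw [inv_mul_eq_div, le_div_iff₀ hb]
  nlinarith [h]

private noncomputable def histSeq (g : List ℕ → ℕ) : ℕ → List ℕ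
  | 0 => []
  | r + 1 => histSeq g r ++ [g (histSeq g r)]

private lemma exists_hist_seq (P : List ℕ → ℕ → Prop) (hP : ∀ l, ∃ n, P l n) :
    ∃ d : ℕ → ℕ, ∀ r, P ((List.range r).map d) (d r) := by
  classical
  refine ⟨fun r => Classical.choose (hP (histSeq (fun l => Classical.choose (hP l)) r)),
    fun r => ?_⟩
  set g : List ℕ → ℕ := fun l => Classical.choose (hP l) with hg
  have hlist : ∀ r, (List.range r).map (fun r => g (histSeq g r)) = histSeq g r := by
    intro r
    induction r with
    | zero => simp [histSeq]
    | succ r ih =>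
      rw [List.range_succ, List.map_append, ih]
      simp [histSeq]
  have := hlist r
  rw [show (fun r => Classical.choose (hP (histSeq (fun l => Classical.choose (hP l)) r)))
      = fun r => g (histSeq g r) from rfl, this]
  exact Classical.choose_spec (hP _)


private lemma key_lemma (p : ℝ) (hp : 1 ≤ p) (w : ℕ → ℝ) (hwpos : ∀ i, 0 < w i)
    (hw : Antitone w) (hw1 : w 0 = 1)
    (hlim : Tendsto w atTop (nhds 0)) (hdiv : ¬ Summable w) (m : ℕ) (hm : 1 ≤ m) :
    ∃ f : ℕ → ℝ, garlingNorm w p f ≠ ⊤ ∧ garlingNorm w p f ≤ ENNReal.ofReal 4 ^ (1/p) ∧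
      ∃ π : Equiv.Perm ℕ,
      ENNReal.ofReal ((m : ℝ) - 1/2) ^ (1/p) ≤ garlingNorm w p (f ∘ π) := by
  classical
  have hp0 : (0:ℝ) < p := lt_of_lt_of_le one_pos hp
  have hpne : p ≠ 0 := ne_of_gt hp0
  set S : ℕ → ℝ := fun n => ∑ i ∈ range n, w i with hSdef
  have hwle1 : ∀ i, w i ≤ 1 := fun i => hw1 ▸ hw (Nat.zero_le i)
  have hSmono : Monotone S := by
    intro a b hab
    exact Finset.sum_le_sum_of_subset_of_nonneg (Finset.range_subset_range.2 hab)
      (fun i _ _ => (hwpos i).le)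
  have hSle : ∀ n : ℕ, S n ≤ (n : ℝ) := by
    intro n
    calc S n ≤ ∑ i ∈ range n, (1:ℝ) := Finset.sum_le_sum (fun i _ => hwle1 i)
    _ = n := by simp
  have hS1 : ∀ n : ℕ, 1 ≤ n → (1:ℝ) ≤ S n := by
    intro n hn
    have := Finset.single_le_sum (f := w) (fun i _ => (hwpos i).le) (Finset.mem_range.2 hn)
    simpa [hSdef, hw1] using this
  have hSpos : ∀ n : ℕ, 1 ≤ n → (0:ℝ) < S n := fun n hn => lt_of_lt_of_le one_pos (hS1 n hn)
  have hStop : Tendsto S atTop atTop :=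
    (not_summable_iff_tendsto_nat_atTop_of_nonneg (fun i => (hwpos i).le)).1 hdiv
  set mR : ℝ := (m : ℝ) with hmRdef
  have hmR : (1:ℝ) ≤ mR := by rw [hmRdef]; exact_mod_cast hm
  have h2m : (0:ℝ) < 2 * mR := by linarith
  -- choice of block lengths
  have hP : ∀ l : List ℕ, ∃ n : ℕ, 1 ≤ n ∧ 2*mR*(1 + ((l.sum : ℕ) : ℝ)) ≤ S n ∧
      ∀ x ∈ l, 2*mR*(x:ℝ) * w n ≤ S x := by
    intro l
    have h1 : ∀ᶠ n : ℕ in atTop, 1 ≤ n := eventually_ge_atTop 1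
    have h2 : ∀ᶠ n : ℕ in atTop, 2*mR*(1 + ((l.sum : ℕ):ℝ)) ≤ S n :=
      hStop.eventually_ge_atTop _
    have h3 : ∀ᶠ n : ℕ in atTop, ∀ x ∈ l.toFinset, 2*mR*(x:ℝ) * w n ≤ S x := by
      rw [eventually_all_finset]
      intro x hx
      rcases Nat.eq_zero_or_pos x with rfl | hxpos
      · refine Eventually.of_forall (fun n => ?_)
        simp [hSdef]
      · have hSx : 0 < S x := hSpos x hxpos
        have hxR : (0:ℝ) < (x:ℝ) := by exact_mod_cast hxpos
        have hδ : 0 < S x / (2*mR*(x:ℝ)) := by positivity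
        filter_upwards [hlim.eventually (gt_mem_nhds hδ)] with n hn
        have h2x : (0:ℝ) < 2*mR*(x:ℝ) := by positivity
        calc 2*mR*(x:ℝ) * w n ≤ 2*mR*(x:ℝ) * (S x / (2*mR*(x:ℝ))) :=
              mul_le_mul_of_nonneg_left hn.le h2x.le
        _ = S x := by field_simp
    obtain ⟨n, ⟨hn1, hn2⟩, hn3⟩ := ((h1.and h2).and h3).exists
    exact ⟨n, hn1, hn2, fun x hx => hn3 x (List.mem_toFinset.2 hx)⟩
  obtain ⟨d, hd⟩ := exists_hist_seq (fun l n => 1 ≤ n ∧ 2*mR*(1 + ((l.sum : ℕ) : ℝ)) ≤ S n ∧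
      ∀ x ∈ l, 2*mR*(x:ℝ) * w n ≤ S x) hP
  have hd1 : ∀ r, 1 ≤ d r := fun r => (hd r).1
  set D : ℕ → ℕ := fun r => ∑ s ∈ range r, d s with hDdef
  have hD0 : D 0 = 0 := by simp [hDdef]
  have hDmono : Monotone D := by
    intro a b hab
    exact Finset.sum_le_sum_of_subset (Finset.range_subset_range.2 hab)
  have hDsucc : ∀ r, D (r+1) = D r + d r := fun r => Finset.sum_range_succ d r
  have hlsum : ∀ r : ℕ, ((List.range r).map d).sum = ∑ s ∈ range r, d s := by
    intro r
    induction r with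
    | zero => simp
    | succ r ih => rw [List.range_succ, List.map_append, List.sum_append,
        Finset.sum_range_succ, ih]; simp
  have hda : ∀ r, 2*mR*(1 + (D r : ℝ)) ≤ S (d r) := by
    intro r
    have h1 := (hd r).2.1
    simp only [hDdef]
    rwa [hlsum r] at h1
  have hdb : ∀ s r, s < r → 2*mR*((d s : ℕ):ℝ) * w (d r) ≤ S (d s) := by
    intro s r hsr
    exact (hd r).2.2 (d s) (List.mem_map.2 ⟨s, List.mem_range.2 hsr, rfl⟩)
  -- the vectors
  set T : ℕ := D m with hTdef
  set blkOf : ℕ → ℕ := fun k => Nat.findGreatest (fun r => D r ≤ k) m with hblkdef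
  set val : ℕ → ℝ := fun r => (S (d r))⁻¹ ^ (1/p) with hvaldef
  set g : ℕ → ℝ := fun k => if k < T then val (blkOf k) else 0 with hgdef
  have hgblk : ∀ r, r < m → ∀ k, D r ≤ k → k < D (r+1) → g k = val r := by
    intro r hr k h1 h2
    have hkm : k < T := by rw [hTdef]; exact lt_of_lt_of_le h2 (hDmono hr)
    have hblkeq : blkOf k = r := by
      have hge : r ≤ blkOf k := by
        simp only [hblkdef]
        exact Nat.le_findGreatest hr.le h1
      have hle : blkOf k ≤ r := by
        by_contra hlt
        push_neg at hlt
        have hspec : D (blkOf k) ≤ k := by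
          simp only [hblkdef]
          exact Nat.findGreatest_spec (P := fun r => D r ≤ k) (Nat.zero_le m)
            (by simp [hD0])
        have : D (r+1) ≤ D (blkOf k) := hDmono hlt
        omega
      omega
    simp only [hgdef]
    rw [if_pos hkm, hblkeq]
  have hgzero : ∀ k, T ≤ k → g k = 0 := by
    intro k hk
    simp [hgdef, Nat.not_lt.2 hk]
  set rev : ℕ → ℕ := fun n => if n < T then T - 1 - n else n with hrevdef
  have hrevlt : ∀ n, n < T → rev n = T - 1 - n := by intro n h; simp [hrevdef, h]
  have hrevge : ∀ n, T ≤ n → rev n = n := by intro n h; simp [hrevdef, Nat.not_lt.2 h]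
  have hrevinv : ∀ n, rev (rev n) = n := by
    intro n
    by_cases h : n < T
    · have h1 : T - 1 - n < T := by omega
      rw [hrevlt n h, hrevlt _ h1]; omega
    · rw [hrevge n (Nat.not_lt.1 h), hrevge n (Nat.not_lt.1 h)]
  set π : Equiv.Perm ℕ := ⟨rev, rev, hrevinv, hrevinv⟩ with hπdef
  set f : ℕ → ℝ := fun n => g (rev n) with hfdef
  have hfπ : f ∘ ⇑π = g := by
    funext n
    show f (rev n) = g n
    rw [hfdef]; simp only []
    rw [hrevinv]
  have hvalnn : ∀ r, 0 ≤ val r := by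
    intro r
    simp only [hvaldef]
    exact Real.rpow_nonneg (inv_nonneg.2 (hSpos _ (hd1 r)).le) _
  have hvalp : ∀ r, |val r| ^ p = (S (d r))⁻¹ := by
    intro r
    rw [abs_of_nonneg (hvalnn r)]
    simp only [hvaldef]
    rw [← Real.rpow_mul (inv_nonneg.2 (hSpos _ (hd1 r)).le), one_div_mul_cancel hpne,
      Real.rpow_one]
  have hQf : ∀ φ : ℕ → ℕ, StrictMono φ → ∑ i ∈ range T, |f (φ i)| ^ p * w i ≤ 4 := by
    intro φ hφ
    have hφi : ∀ i, i ≤ φ i := fun i => hφ.le_apply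
    set E : ℕ → ℕ := fun t => T - D (m - t) with hEdef
    have hE0 : E 0 = 0 := by simp only [hEdef]; rw [Nat.sub_zero, hTdef, Nat.sub_self]
    have hEm : E m = T := by simp only [hEdef]; rw [Nat.sub_self, hD0, Nat.sub_zero]
    have hET : ∀ t, E t ≤ T := fun t => Nat.sub_le _ _
    have hEmono : Monotone E := by
      intro a b hab
      simp only [hEdef]
      have := hDmono (show m - b ≤ m - a by omega)
      omega
    set K : ℕ → ℕ := fun t => ((range T).filter (fun i => φ i < E t)).card with hKdef
    have hstar : ∀ t i, i < K t ↔ φ i < E t := by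
      intro t i
      have hAr : (range T).filter (fun i => φ i < E t) = range (K t) := by
        have h := aux_downclosed ((range T).filter (fun i => φ i < E t)) ?_
        · exact h
        · intro a b hab hb
          rw [Finset.mem_filter, Finset.mem_range] at hb ⊢
          exact ⟨lt_of_le_of_lt hab hb.1, lt_of_le_of_lt (hφ.monotone hab) hb.2⟩
      constructor
      · intro hi
        have h2 : i ∈ (range T).filter (fun i => φ i < E t) := by
          rw [hAr]; exact Finset.mem_range.2 hi
        exact (Finset.mem_filter.1 h2).2
      · intro hi
        have hiT : i < T := lt_of_le_of_lt (hφi i) (lt_of_lt_of_le hi (hET t))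
        have h2 : i ∈ (range T).filter (fun i => φ i < E t) :=
          Finset.mem_filter.2 ⟨Finset.mem_range.2 hiT, hi⟩
        rw [hAr, Finset.mem_range] at h2
        exact h2
    have hK0 : K 0 = 0 := by
      by_contra h
      have h2 : φ 0 < E 0 := (hstar 0 0).1 (Nat.pos_of_ne_zero h)
      rw [hE0] at h2
      exact Nat.not_lt_zero _ h2
    have hKmono : Monotone K := by
      intro a b hab
      by_contra hcon
      push_neg at hcon
      have h1 : φ (K b) < E a := (hstar a (K b)).1 hcon
      have h2 : φ (K b) < E b := lt_of_lt_of_le h1 (hEmono hab)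
      have h3 := (hstar b (K b)).2 h2
      omega
    have hKT : K m ≤ T := by
      simp only [hKdef]
      calc ((range T).filter (fun i => φ i < E m)).card ≤ (range T).card :=
            Finset.card_filter_le _ _
      _ = T := Finset.card_range T
    have hKd : ∀ t, t < m → K (t+1) - K t ≤ d (m - 1 - t) := by
      intro t ht
      have hsub : (Ico (K t) (K (t+1))).card ≤ (Ico (E t) (E (t+1))).card := by
        apply Finset.card_le_card_of_injOn φ
        · intro i hi
          rw [Finset.mem_coe, Finset.mem_Ico] at hi
          rw [Finset.mem_coe, Finset.mem_Ico]
          constructor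
          · by_contra hc
            push_neg at hc
            have h4 := (hstar t i).2 hc
            omega
          · exact (hstar (t+1) i).1 hi.2
        · exact Set.injOn_of_injective hφ.injective
      rw [Nat.card_Ico, Nat.card_Ico] at hsub
      have e1 : m - (t+1) = m - 1 - t := by omega
      have h1 : D (m - 1 - t) + d (m - 1 - t) = D (m - t) := by
        rw [← hDsucc]; congr 1; omega
      have h2 : D (m - t) ≤ T := by rw [hTdef]; exact hDmono (Nat.sub_le m t)
      have hEt : E t = T - D (m - t) := rfl
      have hEt1 : E (t+1) = T - D (m - 1 - t) := by simp only [hEdef]; rw [e1]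
      omega
    have hfval : ∀ t, t < m → ∀ i, K t ≤ i → i < K (t+1) →
        |f (φ i)| ^ p = (S (d (m - 1 - t)))⁻¹ := by
      intro t ht i h1 h2
      have hphie : E t ≤ φ i := by
        by_contra hc
        push_neg at hc
        have h3 := (hstar t i).2 hc
        omega
      have hphilt : φ i < E (t+1) := (hstar (t+1) i).1 h2
      have e1 : m - (t+1) = m - 1 - t := by omega
      have hDs : D (m - 1 - t) + d (m - 1 - t) = D (m - t) := by
        rw [← hDsucc]; congr 1; omega
      have hDle : D (m - t) ≤ T := by rw [hTdef]; exact hDmono (Nat.sub_le m t)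
      have hEt : E t = T - D (m - t) := rfl
      have hEt1 : E (t+1) = T - D (m - 1 - t) := by simp only [hEdef]; rw [e1]
      have hd1' := hd1 (m - 1 - t)
      have hphiT : φ i < T := by omega
      have hrv : rev (φ i) = T - 1 - φ i := hrevlt _ hphiT
      have hlow : D (m - 1 - t) ≤ rev (φ i) := by omega
      have hhigh : rev (φ i) < D (m - 1 - t + 1) := by rw [hDsucc]; omega
      have hfv : f (φ i) = val (m - 1 - t) := by
        show g (rev (φ i)) = _
        exact hgblk (m - 1 - t) (by omega) _ hlow hhigh
      rw [hfv, hvalp]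
    have hfzero : ∀ i, K m ≤ i → |f (φ i)| ^ p * w i = 0 := by
      intro i hi
      have hphi : T ≤ φ i := by
        by_contra hc
        push_neg at hc
        have h2 : φ i < E m := by rw [hEm]; exact hc
        have h3 := (hstar m i).2 h2
        omega
      have hf0 : f (φ i) = 0 := by
        show g (rev (φ i)) = 0
        rw [hrevge _ hphi]
        exact hgzero _ hphi
      rw [hf0, abs_zero, Real.zero_rpow hpne, zero_mul]
    have hsum1 : ∑ i ∈ range T, |f (φ i)| ^ p * w i
        = ∑ i ∈ range (K m), |f (φ i)| ^ p * w i := by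
      symm
      apply Finset.sum_subset (Finset.range_subset_range.2 hKT)
      intro i _ hi
      rw [Finset.mem_range, Nat.not_lt] at hi
      exact hfzero i hi
    have hsum2 := aux_telescope K hK0 hKmono (fun i => |f (φ i)| ^ p * w i) m
    set l₀ : ℕ := Nat.findGreatest (fun t => K t ≤ D (m - 1 - t)) (m - 1) with hl₀def
    have hl₀good : K l₀ ≤ D (m - 1 - l₀) := by
      simp only [hl₀def]
      exact Nat.findGreatest_spec (P := fun t => K t ≤ D (m - 1 - t)) (Nat.zero_le _)
        (by simp [hK0])
    have hl₀max : ∀ t, l₀ < t → t ≤ m - 1 → D (m - 1 - t) < K t := by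
      intro t h1 h2
      have h3 := Nat.findGreatest_is_greatest (P := fun t => K t ≤ D (m - 1 - t)) h1 h2
      omega
    have hl₀le : l₀ ≤ m - 1 := Nat.findGreatest_le _
    have hCt : ∀ t, t < m → ∑ i ∈ Ico (K t) (K (t+1)), |f (φ i)| ^ p * w i ≤
        (if l₀ ≤ t ∧ t ≤ l₀ + 2 then (1:ℝ) else 1/(2*mR)) := by
      intro t ht
      set r : ℕ := m - 1 - t with hrdef
      have hrm : r < m := by omega
      have hCeq : ∑ i ∈ Ico (K t) (K (t+1)), |f (φ i)| ^ p * w i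
          = (S (d r))⁻¹ * ∑ i ∈ Ico (K t) (K (t+1)), w i := by
        rw [Finset.mul_sum]
        apply Finset.sum_congr rfl
        intro i hi
        rw [Finset.mem_Ico] at hi
        rw [hfval t ht i hi.1 hi.2]
      have hSdr : 0 < S (d r) := hSpos _ (hd1 r)
      by_cases hcase : l₀ ≤ t ∧ t ≤ l₀ + 2
      · rw [if_pos hcase, hCeq]
        have hWb : ∑ i ∈ Ico (K t) (K (t+1)), w i ≤ S (d r) := by
          calc ∑ i ∈ Ico (K t) (K (t+1)), w i
              ≤ ∑ i ∈ range (K (t+1) - K t), w i := by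
                rw [Finset.sum_Ico_eq_sum_range]
                exact Finset.sum_le_sum (fun i _ => hw (Nat.le_add_left i _))
          _ = S (K (t+1) - K t) := rfl
          _ ≤ S (d r) := hSmono (hKd t ht)
        calc (S (d r))⁻¹ * ∑ i ∈ Ico (K t) (K (t+1)), w i
            ≤ (S (d r))⁻¹ * S (d r) :=
              mul_le_mul_of_nonneg_left hWb (inv_nonneg.2 hSdr.le)
        _ = 1 := inv_mul_cancel₀ hSdr.ne'
      · rw [if_neg hcase, hCeq]
        push_neg at hcase
        rcases Nat.lt_or_ge t l₀ with hlt | hge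
        · -- t < l₀
          have hK1 : K (t+1) ≤ K l₀ := hKmono (by omega)
          have hDD : D (m - 1 - l₀) ≤ D r := hDmono (by omega)
          have hWb : ∑ i ∈ Ico (K t) (K (t+1)), w i ≤ ((D r : ℕ) : ℝ) := by
            calc ∑ i ∈ Ico (K t) (K (t+1)), w i ≤ ∑ i ∈ range (K (t+1)), w i :=
                  Finset.sum_le_sum_of_subset_of_nonneg
                    (by intro x hx; rw [Finset.mem_Ico] at hx; exact Finset.mem_range.2 hx.2)
                    (fun i _ _ => (hwpos i).le)
            _ = S (K (t+1)) := rfl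
            _ ≤ S (D r) := hSmono (le_trans hK1 (le_trans hl₀good hDD))
            _ ≤ ((D r : ℕ) : ℝ) := hSle _
          apply aux_inv_mul_le _ _ _ hSdr h2m
          calc 2*mR*∑ i ∈ Ico (K t) (K (t+1)), w i ≤ 2*mR*((D r : ℕ) : ℝ) :=
                mul_le_mul_of_nonneg_left hWb h2m.le
          _ ≤ S (d r) := by nlinarith [hda r, h2m]
        · -- t > l₀ + 2
          have htl : l₀ + 2 < t := hcase hge
          have hl₀m : l₀ + 1 ≤ m - 1 := by omega
          have hKl : D (m - 1 - (l₀+1)) < K (l₀+1) := hl₀max (l₀+1) (by omega) hl₀m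
          set s0 : ℕ := m - 2 - l₀ - 1 with hs0def
          have hs0 : s0 + 1 = m - 2 - l₀ := by omega
          have hrs0 : r < s0 := by omega
          have hDs0 : d s0 ≤ D (m - 2 - l₀) := by
            rw [← hs0, hDsucc]; omega
          have e2 : m - 1 - (l₀ + 1) = m - 2 - l₀ := by omega
          have hKt : d s0 < K t := by
            have h5 : K (l₀ + 1) ≤ K t := hKmono (by omega)
            rw [e2] at hKl
            omega
          have hcard : (Ico (K t) (K (t+1))).card ≤ d r := by
            rw [Nat.card_Ico]; exact hKd t ht
          have hWb : ∑ i ∈ Ico (K t) (K (t+1)), w i ≤ ((d r : ℕ) : ℝ) * w (d s0) := by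
            calc ∑ i ∈ Ico (K t) (K (t+1)), w i
                ≤ (Ico (K t) (K (t+1))).card • w (d s0) := by
                  apply Finset.sum_le_card_nsmul
                  intro i hi
                  rw [Finset.mem_Ico] at hi
                  exact hw (by omega)
            _ = (((Ico (K t) (K (t+1))).card : ℕ) : ℝ) * w (d s0) := nsmul_eq_mul _ _
            _ ≤ ((d r : ℕ) : ℝ) * w (d s0) := by
                  apply mul_le_mul_of_nonneg_right _ (hwpos _).le
                  exact_mod_cast hcard
          apply aux_inv_mul_le _ _ _ hSdr h2m
          calc 2*mR*∑ i ∈ Ico (K t) (K (t+1)), w i ≤ 2*mR*(((d r : ℕ) : ℝ) * w (d s0)) :=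
                mul_le_mul_of_nonneg_left hWb h2m.le
          _ = 2*mR*((d r : ℕ) : ℝ) * w (d s0) := by ring
          _ ≤ S (d r) := hdb r s0 hrs0
    rw [hsum1, hsum2]
    have hsum3 : ∑ t ∈ range m, ∑ i ∈ Ico (K t) (K (t+1)), |f (φ i)| ^ p * w i
        ≤ ∑ t ∈ range m, (if l₀ ≤ t ∧ t ≤ l₀ + 2 then (1:ℝ) else 1/(2*mR)) :=
      Finset.sum_le_sum (fun t ht => hCt t (Finset.mem_range.1 ht))
    refine le_trans hsum3 ?_
    rw [Finset.sum_ite, Finset.sum_const, Finset.sum_const]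
    have hc1 : (((range m).filter (fun t => l₀ ≤ t ∧ t ≤ l₀ + 2)).card : ℝ) ≤ 3 := by
      have hsub : (range m).filter (fun t => l₀ ≤ t ∧ t ≤ l₀ + 2) ⊆ Finset.Icc l₀ (l₀+2) := by
        intro x hx
        rw [Finset.mem_filter] at hx
        rw [Finset.mem_Icc]
        exact hx.2
      have := le_trans (Finset.card_le_card hsub) (le_of_eq (by rw [Nat.card_Icc]; omega :
        (Finset.Icc l₀ (l₀+2)).card = 3))
      exact_mod_cast this
    have hc2 : (((range m).filter (fun t => ¬(l₀ ≤ t ∧ t ≤ l₀ + 2))).card : ℝ) ≤ mR := by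
      rw [hmRdef]
      exact_mod_cast le_trans (Finset.card_filter_le _ _) (le_of_eq (Finset.card_range m))
    rw [nsmul_eq_mul, nsmul_eq_mul]
    have h3 : (0:ℝ) < 1/(2*mR) := by positivity
    have hmne : mR ≠ 0 := by positivity
    have h4 : mR * (1/(2*mR)) = 1/2 := by field_simp
    have h5 := mul_le_mul_of_nonneg_right hc2 h3.le
    nlinarith [hc1, h5, h4]
  have hQg : (m:ℝ) - 1/2 ≤ ∑ i ∈ range T, |g i| ^ p * w i := by
    have htel := aux_telescope D hD0 hDmono (fun i => |g i| ^ p * w i) m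
    rw [hTdef, htel]
    have hper : ∀ t, t < m →
        (1 : ℝ) - 1/(2*mR) ≤ ∑ i ∈ Ico (D t) (D (t+1)), |g i| ^ p * w i := by
      intro t ht
      have hval_eq : ∀ i ∈ Ico (D t) (D (t+1)), |g i| ^ p * w i = (S (d t))⁻¹ * w i := by
        intro i hi
        rw [Finset.mem_Ico] at hi
        rw [hgblk t ht i hi.1 hi.2, hvalp]
      rw [Finset.sum_congr rfl hval_eq, ← Finset.mul_sum]
      have hDle : D t ≤ D (t+1) := hDmono (Nat.le_succ t)
      rw [Finset.sum_Ico_eq_sub w hDle]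
      have hSdt : 0 < S (d t) := hSpos _ (hd1 t)
      apply aux_le_inv_mul _ _ _ hSdt
      have h1 : S (d t) ≤ S (D (t+1)) := by
        apply hSmono
        rw [hDsucc]
        omega
      have h2 : S (D t) ≤ ((D t : ℕ) : ℝ) := hSle _
      have h3 : 2*mR*(1 + ((D t : ℕ) : ℝ)) ≤ S (d t) := hda t
      have h5 : ((D t : ℕ) : ℝ) ≤ S (d t)/(2*mR) - 1 := by
        rw [le_sub_iff_add_le, le_div_iff₀ h2m]
        nlinarith [h3]
      have h6 : 1/(2*mR) * S (d t) = S (d t) / (2*mR) := by ring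
      nlinarith [h1, h2, h5, h6, hSdt, h2m]
    have hsum : ∑ t ∈ range m, ((1:ℝ) - 1/(2*mR))
        ≤ ∑ t ∈ range m, ∑ i ∈ Ico (D t) (D (t+1)), |g i| ^ p * w i :=
      Finset.sum_le_sum (fun t ht => hper t (Finset.mem_range.1 ht))
    rw [Finset.sum_const, Finset.card_range, nsmul_eq_mul] at hsum
    have hmne : mR ≠ 0 := by positivity
    have heq : ((m:ℕ) : ℝ) * (1 - 1/(2*mR)) = mR - 1/2 := by
      rw [← hmRdef]
      field_simp
    linarith [hsum, heq, hmRdef.ge, hmRdef.le]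
  have htermnn : ∀ (h : ℕ → ℝ) (i : ℕ), 0 ≤ |h i| ^ p * w i := fun h i =>
    mul_nonneg (Real.rpow_nonneg (abs_nonneg _) _) (hwpos i).le
  have hQfE : (⨆ φ : {φ : ℕ → ℕ // StrictMono φ},
      ∑' i : ℕ, ENNReal.ofReal (|f (φ.1 i)| ^ p * w i)) ≤ ENNReal.ofReal 4 := by
    apply iSup_le
    rintro ⟨φ, hφ⟩
    have hzero : ∀ i ∉ range T, ENNReal.ofReal (|f (φ i)| ^ p * w i) = 0 := by
      intro i hi
      rw [Finset.mem_range, Nat.not_lt] at hi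
      have hTφ : T ≤ φ i := le_trans hi hφ.le_apply
      have hf0 : f (φ i) = 0 := by
        show g (rev (φ i)) = 0
        rw [hrevge _ hTφ]
        exact hgzero _ hTφ
      rw [hf0, abs_zero, Real.zero_rpow hpne, zero_mul, ENNReal.ofReal_zero]
    rw [tsum_eq_sum hzero, ← ENNReal.ofReal_sum_of_nonneg (fun i _ => htermnn (fun j => f (φ j)) i)]
    exact ENNReal.ofReal_le_ofReal (hQf φ hφ)
  have h1p : (0:ℝ) ≤ 1/p := by positivity
  have hfin : garlingNorm w p f ≠ ⊤ := by
    simp only [garlingNorm]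
    exact ENNReal.rpow_ne_top_of_nonneg h1p
      (ne_top_of_le_ne_top ENNReal.ofReal_ne_top hQfE)
  have hupper : garlingNorm w p f ≤ ENNReal.ofReal 4 ^ (1/p) := by
    simp only [garlingNorm]
    exact ENNReal.rpow_le_rpow hQfE h1p
  refine ⟨f, hfin, hupper, π, ?_⟩
  rw [hfπ]
  simp only [garlingNorm]
  apply ENNReal.rpow_le_rpow _ h1p
  refine le_trans ?_ (le_iSup (fun φ : {φ : ℕ → ℕ // StrictMono φ} =>
    ∑' i : ℕ, ENNReal.ofReal (|g (φ.1 i)| ^ p * w i)) ⟨id, strictMono_id⟩)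
  show ENNReal.ofReal ((m:ℝ) - 1/2) ≤ ∑' i : ℕ, ENNReal.ofReal (|g i| ^ p * w i)
  refine le_trans ?_ (ENNReal.sum_le_tsum (range T))
  rw [← ENNReal.ofReal_sum_of_nonneg (fun i _ => htermnn g i)]
  exact ENNReal.ofReal_le_ofReal hQg

theorem stmt_14 (p : ℝ) (hp : 1 ≤ p) (w : ℕ → ℝ) (hwpos : ∀ i, 0 < w i)
    (hw : Antitone w) (hw1 : w 0 = 1)
    (hlim : Tendsto w atTop (nhds 0)) (hdiv : ¬ Summable w) :
    ¬ ∃ C : ℝ, ∀ f : ℕ → ℝ, garlingNorm w p f ≠ ⊤ → ∀ π : Equiv.Perm ℕ,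
      garlingNorm w p (f ∘ π) ≤ ENNReal.ofReal C * garlingNorm w p f := by
  rintro ⟨C, hC⟩
  have hp0 : (0:ℝ) < p := lt_of_lt_of_le one_pos hp
  have hpne : p ≠ 0 := ne_of_gt hp0
  set B : ℝ≥0∞ := (ENNReal.ofReal C) ^ p * ENNReal.ofReal 4 with hBdef
  have hBtop : B ≠ ⊤ := by
    rw [hBdef]
    exact ENNReal.mul_ne_top (ENNReal.rpow_ne_top_of_nonneg hp0.le ENNReal.ofReal_ne_top)
      ENNReal.ofReal_ne_top
  have key : ∀ m : ℕ, 1 ≤ m → ENNReal.ofReal ((m:ℝ) - 1/2) ≤ B := by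
    intro m hm
    obtain ⟨f, hfin, hupper, π, hlower⟩ := key_lemma p hp w hwpos hw hw1 hlim hdiv m hm
    have hmain := hC f hfin π
    have h5 : ENNReal.ofReal ((m:ℝ) - 1/2) ^ (1/p) ≤
        ENNReal.ofReal C * ENNReal.ofReal 4 ^ (1/p) :=
      le_trans hlower (le_trans hmain (mul_le_mul_right hupper _))
    have h6 := ENNReal.rpow_le_rpow h5 hp0.le
    rw [ENNReal.mul_rpow_of_nonneg _ _ hp0.le] at h6
    rw [← ENNReal.rpow_mul, ← ENNReal.rpow_mul] at h6
    have hinv : 1/p * p = 1 := one_div_mul_cancel hpne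
    rw [hinv, ENNReal.rpow_one, ENNReal.rpow_one] at h6
    exact h6
  set R : ℝ := B.toReal with hRdef
  have h := key (⌈R⌉₊ + 1) (by omega)
  rw [← ENNReal.ofReal_toReal hBtop] at h
  have h2 : ((⌈R⌉₊ + 1 : ℕ) : ℝ) - 1/2 ≤ R :=
    (ENNReal.ofReal_le_ofReal_iff ENNReal.toReal_nonneg).1 h
  have h3 : R ≤ (⌈R⌉₊ : ℝ) := Nat.le_ceil R
  push_cast at h2
  linarith
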